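/- Let $G$ be a graph obtained as a $k$-clique-sum of vertex-disjoint graphs $G_1$ and $G_2$ with $k \ge 1$ and common clique $K = \{v_1, \dots, v_k\}$, let $G_i' = G_i \cap G$ for $i = 1, 2$, let $D_1'$ be an orientation of $G_1'$, let $D_2$ be an orientation of $G_2$ with $d_{D_2}^+(v_i) = i - 1$ for $i = 1, \dots, k$ (so that $D_2$ has no arc from $K$ to $V(G_2) \setminus K$), let $D_2'$ be the restriction of $D_2$ to $G_2 - E(G[K])$, and let $D = D_1' \cup D_2'$ be the induced orientation of $G$. Then every Eulerian subdigraph $H$ of $D$ contains no arc from $V(G_2) \setminus K$ to $K$. -/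

import Mathlib

/-- `D` (a finite set of arcs) is an orientation of the graph `G`:
every edge of `G` gets exactly one direction, and there are no other arcs. -/
def IsOrientation {V : Type*} (G : SimpleGraph V) (D : Finset (V × V)) : Prop :=
  ∀ x y : V, (G.Adj x y ↔ ((x, y) ∈ D ∨ (y, x) ∈ D)) ∧ ¬((x, y) ∈ D ∧ (y, x) ∈ D)

/-- The out-degree of a vertex in a digraph given by its arc set. -/
def outDeg {V : Type*} [DecidableEq V] (D : Finset (V × V)) (x : V) : ℕ :=
  (D.filter fun p => p.1 = x).card

/-- The in-degree of a vertex in a digraph given by its arc set. -/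
def inDeg {V : Type*} [DecidableEq V] (D : Finset (V × V)) (x : V) : ℕ :=
  (D.filter fun p => p.2 = x).card

/-- `H` is an Eulerian (spanning) subdigraph of `D`: a subset of the arcs such that
in-degree equals out-degree at every vertex. -/
def IsEulerianSub {V : Type*} [DecidableEq V] (D H : Finset (V × V)) : Prop :=
  H ⊆ D ∧ ∀ x, outDeg H x = inDeg H x

/-- The set of Eulerian subdigraphs of `D` with an even number of arcs. -/
def EE {V : Type*} [DecidableEq V] (D : Finset (V × V)) : Set (Finset (V × V)) :=
  {H | IsEulerianSub D H ∧ Even H.card}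

/-- The set of Eulerian subdigraphs of `D` with an odd number of arcs. -/
def OE {V : Type*} [DecidableEq V] (D : Finset (V × V)) : Set (Finset (V × V)) :=
  {H | IsEulerianSub D H ∧ Odd H.card}

/-- `D` is an AT-orientation if `|EE(D)| ≠ |OE(D)|`. -/
def IsATOrientation {V : Type*} [DecidableEq V] (D : Finset (V × V)) : Prop :=
  (EE D).ncard ≠ (OE D).ncard

/-- A digraph is acyclic if it has no (nontrivial) closed directed walk. -/
def IsAcyclicOrientation {V : Type*} (D : Finset (V × V)) : Prop :=
  ¬ ∃ (n : ℕ) (c : ℕ → V), 0 < n ∧ c n = c 0 ∧ ∀ i < n, (c i, c (i + 1)) ∈ D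

/-- The Alon–Tarsi number of `G`: the least `k` such that `G` has an
AT-orientation with all out-degrees less than `k`. -/
noncomputable def alonTarsiNumber {V : Type*} [DecidableEq V] (G : SimpleGraph V) : ℕ :=
  sInf {k | ∃ D : Finset (V × V),
    IsOrientation G D ∧ IsATOrientation D ∧ ∀ x, outDeg D x < k}

open scoped Classical in
/-- Let `G` be a `k`-clique-sum (`k ≥ 1`) of graphs `G₁`, `G₂` on vertex sets `S₁`, `S₂`
with common clique `K = {v 0, …, v (k-1)} = S₁ ∩ S₂`, let `D₁'` be an orientation of
`G₁' = G ⊓ G₁`, let `D₂` be an orientation of `G₂` with `d⁺_{D₂}(v i) = i` for each `i`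
(so `D₂` has no arc from `K` to `V(G₂) \ K`), let `D₂'` be the restriction of `D₂` to
`G₂ - E(G[K])`, and let `D = D₁' ∪ D₂'` be the induced orientation of `G`. Then every
Eulerian subdigraph `H` of `D` contains no arc from `V(G₂) \ K` to `K`. -/
theorem cliqueSum_eulerian_no_arc_into_clique {V : Type*} [Fintype V] [DecidableEq V]
    (k : ℕ) (hk : 1 ≤ k)
    (G G₁ G₂ : SimpleGraph V) (S₁ S₂ : Set V) (v : Fin k → V)
    (hv : Function.Injective v)
    (hcover : S₁ ∪ S₂ = Set.univ)
    (hK : S₁ ∩ S₂ = Set.range v)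
    (hS₁ : ∀ x y, G₁.Adj x y → x ∈ S₁ ∧ y ∈ S₁)
    (hS₂ : ∀ x y, G₂.Adj x y → x ∈ S₂ ∧ y ∈ S₂)
    (hclique₁ : ∀ i j : Fin k, i ≠ j → G₁.Adj (v i) (v j))
    (hclique₂ : ∀ i j : Fin k, i ≠ j → G₂.Adj (v i) (v j))
    (hGle : G ≤ G₁ ⊔ G₂)
    (hGge : ∀ x y, (G₁ ⊔ G₂).Adj x y →
      ¬(x ∈ Set.range v ∧ y ∈ Set.range v) → G.Adj x y)
    (D₁' : Finset (V × V)) (hD₁' : IsOrientation (G ⊓ G₁) D₁')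
    (D₂ : Finset (V × V)) (hD₂ : IsOrientation G₂ D₂)
    (hdegK : ∀ i : Fin k, outDeg D₂ (v i) = (i : ℕ))
    (D₂' : Finset (V × V))
    (hD₂' : D₂' = D₂.filter fun p => p.1 ∉ Set.range v ∨ p.2 ∉ Set.range v)
    (D : Finset (V × V)) (hD : D = D₁' ∪ D₂')
    (hDG : IsOrientation G D)
    (H : Finset (V × V)) (hH : IsEulerianSub D H) :
    ∀ x y : V, x ∈ S₂ → x ∉ Set.range v → y ∈ Set.range v → (x, y) ∉ H := by
  classical
  -- Step 1: `D₂` has no arc from the clique `K = range v` to the outside.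
  have hkey : ∀ p ∈ D₂, p.1 ∈ Set.range v → p.2 ∈ Set.range v := by
    set T : Finset (V × V) := D₂.filter (fun p => p.1 ∈ Set.range v) with hT
    set Tin : Finset (V × V) :=
      D₂.filter (fun p => p.1 ∈ Set.range v ∧ p.2 ∈ Set.range v) with hTin
    have hsub : Tin ⊆ T := by
      intro p hp
      rw [hTin, Finset.mem_filter] at hp
      rw [hT, Finset.mem_filter]
      exact ⟨hp.1, hp.2.1⟩
    have hne : ∀ p ∈ D₂, p.1 ≠ p.2 := by
      intro p hp heq
      have hadj : G₂.Adj p.1 p.2 := ((hD₂ p.1 p.2).1).mpr (Or.inl hp)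
      exact hadj.ne heq
    have hTcard : T.card = ∑ i : Fin k, (i : ℕ) := by
      have h1 : T.card =
          ∑ x ∈ Finset.univ.image v, (T.filter (fun p => p.1 = x)).card := by
        refine Finset.card_eq_sum_card_fiberwise ?_
        intro p hp
        have hp : p ∈ T := hp
        simp only [hT, Finset.mem_filter] at hp
        obtain ⟨i, hi⟩ := hp.2
        rw [Finset.mem_coe]
        simp only [Finset.mem_image]
        exact ⟨i, Finset.mem_univ i, hi⟩
      rw [Finset.sum_image (fun i _ j _ h => hv h)] at h1
      rw [h1]
      refine Finset.sum_congr rfl fun i _ => ?_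
      rw [← hdegK i]
      unfold outDeg
      congr 1
      rw [hT, Finset.filter_filter]
      apply Finset.filter_congr
      intro p hp
      constructor
      · rintro ⟨_, h⟩; exact h
      · intro h; exact ⟨⟨i, h.symm⟩, h⟩
    have himinj : Function.Injective (fun q : Fin k × Fin k => (v q.1, v q.2)) := by
      intro a b hab
      simp only [Prod.mk.injEq] at hab
      exact Prod.ext (hv hab.1) (hv hab.2)
    have hPairs : Tin ∪ Tin.image Prod.swap =
        (Finset.univ.offDiag : Finset (Fin k × Fin k)).image
          (fun q => (v q.1, v q.2)) := by
      ext p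
      simp only [Finset.mem_union, Finset.mem_image, Finset.mem_offDiag, hTin,
        Finset.mem_filter, Finset.mem_univ, true_and]
      constructor
      · rintro (⟨hp, ⟨i, hi⟩, ⟨j, hj⟩⟩ | ⟨q, ⟨hq, ⟨i, hi⟩, ⟨j, hj⟩⟩, hqp⟩)
        · refine ⟨(i, j), ?_, by simp [hi, hj]⟩
          intro hij
          exact hne p hp (by rw [← hi, ← hj]; exact congrArg v hij)
        · refine ⟨(j, i), ?_, ?_⟩
          · intro hij
            exact hne q hq (by rw [← hi, ← hj]; exact (congrArg v hij).symm)
          · simp only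
            rw [hi, hj, ← hqp]
            rfl
      · rintro ⟨⟨i, j⟩, hij, hp⟩
        simp only at hij hp
        have hadj : G₂.Adj (v i) (v j) := hclique₂ i j hij
        rcases ((hD₂ (v i) (v j)).1).mp hadj with h | h
        · left
          rw [← hp]
          exact ⟨h, ⟨i, rfl⟩, ⟨j, rfl⟩⟩
        · right
          exact ⟨(v j, v i), ⟨h, ⟨j, rfl⟩, ⟨i, rfl⟩⟩, by rw [← hp]; rfl⟩
    have hdisj : Disjoint Tin (Tin.image Prod.swap) := by
      rw [Finset.disjoint_left]
      intro p hp hp'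
      simp only [hTin, Finset.mem_filter, Finset.mem_image] at hp hp'
      obtain ⟨q, hq, hqp⟩ := hp'
      have h1 : (p.1, p.2) ∈ D₂ := hp.1
      have h2 : (p.2, p.1) ∈ D₂ := by
        have : q = (p.2, p.1) := by
          rw [← hqp]; rfl
        rw [← this]; exact hq.1
      exact (hD₂ p.1 p.2).2 ⟨h1, h2⟩
    have hTin2 : Tin.card * 2 = k * k - k := by
      have hcu : (Tin ∪ Tin.image Prod.swap).card = Tin.card * 2 := by
        rw [Finset.card_union_of_disjoint hdisj,
          Finset.card_image_of_injective _ Prod.swap_injective]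
        ring
      rw [← hcu, hPairs, Finset.card_image_of_injective _ himinj,
        Finset.offDiag_card, Finset.card_univ, Fintype.card_fin]
    have hT2 : T.card * 2 = k * k - k := by
      rw [hTcard, Fin.sum_univ_eq_sum_range (fun i => i) k,
        Finset.sum_range_id_mul_two]
      rw [Nat.mul_sub, Nat.mul_one]
    have hTeq : Tin = T := by
      refine Finset.eq_of_subset_of_card_le hsub (by omega)
    intro p hp h1
    have : p ∈ Tin := by
      rw [hTeq, hT]
      exact Finset.mem_filter.mpr ⟨hp, h1⟩
    exact (Finset.mem_filter.mp this).2.2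
  -- Step 2: every arc of `H` whose head lies in `A = S₂ \ K` has its tail in `A`.
  have hstep2 : ∀ p ∈ H, p.2 ∈ S₂ → p.2 ∉ Set.range v →
      p.1 ∈ S₂ ∧ p.1 ∉ Set.range v := by
    intro p hp h2 h2'
    have hpD := hH.1 hp
    rw [hD] at hpD
    rcases Finset.mem_union.mp hpD with h | h
    · exfalso
      have hadj : (G ⊓ G₁).Adj p.1 p.2 := ((hD₁' p.1 p.2).1).mpr (Or.inl h)
      have hp2 : p.2 ∈ S₁ := (hS₁ p.1 p.2 hadj.2).2
      exact h2' (by rw [← hK]; exact ⟨hp2, h2⟩)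
    · rw [hD₂'] at h
      have h' := Finset.mem_filter.mp h
      have hadj : G₂.Adj p.1 p.2 := ((hD₂ p.1 p.2).1).mpr (Or.inl h'.1)
      refine ⟨(hS₂ _ _ hadj).1, fun h1 => h2' (hkey p h'.1 h1)⟩
  -- Step 3: counting in the Eulerian subdigraph.
  set A : Finset V := Finset.univ.filter (fun x => x ∈ S₂ ∧ x ∉ Set.range v) with hA
  set Hout : Finset (V × V) :=
    H.filter (fun p => p.1 ∈ S₂ ∧ p.1 ∉ Set.range v) with hHout
  set Hin : Finset (V × V) :=
    H.filter (fun p => p.2 ∈ S₂ ∧ p.2 ∉ Set.range v) with hHin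
  have houtcard : Hout.card = ∑ x ∈ A, outDeg H x := by
    have h1 : Hout.card = ∑ x ∈ A, (Hout.filter (fun p => p.1 = x)).card := by
      refine Finset.card_eq_sum_card_fiberwise ?_
      intro p hp
      have hp : p ∈ Hout := hp
      simp only [hHout, Finset.mem_filter] at hp
      rw [Finset.mem_coe]
      simp only [hA, Finset.mem_filter, Finset.mem_univ, true_and]
      exact hp.2
    rw [h1]
    refine Finset.sum_congr rfl fun x hx => ?_
    simp only [hA, Finset.mem_filter, Finset.mem_univ, true_and] at hx
    unfold outDeg
    congr 1
    rw [hHout, Finset.filter_filter]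
    apply Finset.filter_congr
    intro p hp
    constructor
    · rintro ⟨_, h⟩; exact h
    · intro h; exact ⟨h ▸ hx, h⟩
  have hincard : Hin.card = ∑ x ∈ A, inDeg H x := by
    have h1 : Hin.card = ∑ x ∈ A, (Hin.filter (fun p => p.2 = x)).card := by
      refine Finset.card_eq_sum_card_fiberwise ?_
      intro p hp
      have hp : p ∈ Hin := hp
      simp only [hHin, Finset.mem_filter] at hp
      rw [Finset.mem_coe]
      simp only [hA, Finset.mem_filter, Finset.mem_univ, true_and]
      exact hp.2
    rw [h1]
    refine Finset.sum_congr rfl fun x hx => ?_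
    simp only [hA, Finset.mem_filter, Finset.mem_univ, true_and] at hx
    unfold inDeg
    congr 1
    rw [hHin, Finset.filter_filter]
    apply Finset.filter_congr
    intro p hp
    constructor
    · rintro ⟨_, h⟩; exact h
    · intro h; exact ⟨h ▸ hx, h⟩
  have hsubHO : Hin ⊆ Hout := by
    intro p hp
    rw [hHin, Finset.mem_filter] at hp
    rw [hHout, Finset.mem_filter]
    exact ⟨hp.1, hstep2 p hp.1 hp.2.1 hp.2.2⟩
  have hcards : Hout.card = Hin.card := by
    rw [houtcard, hincard]
    exact Finset.sum_congr rfl fun x _ => hH.2 x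
  have hHeq : Hin = Hout := Finset.eq_of_subset_of_card_le hsubHO (le_of_eq hcards)
  intro x y hx1 hx2 hy hxy
  have hmem : (x, y) ∈ Hout := Finset.mem_filter.mpr ⟨hxy, hx1, hx2⟩
  rw [← hHeq] at hmem
  exact (Finset.mem_filter.mp hmem).2.2 hy
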